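/- Let G = (V,E) be a directed graph with n nodes, source s, sink t, and capacities ν. If, for each k = 1,…,n−1, one repeatedly (m times) augments the current flow by a flow supported on arcs lying on s-t-paths of length exactly k in the current residual network, each such augmentation saturating at least one such arc whenever one exists, then after all iterations the resulting flow is a maximum s-t-flow. -/

import Mathlib

open Finset

noncomputable def resCap {N : ℕ} (ν x : Fin N → Fin N → ℝ) (u v : Fin N) : ℝ :=
  if u < v then ν u v - x u v else if v < u then ν u v + x v u else 0

def IsFeasibleFlow {N : ℕ} (s t : Fin N) (ν x : Fin N → Fin N → ℝ) : Prop :=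
  (∀ u v : Fin N, u < v → -ν v u ≤ x u v ∧ x u v ≤ ν u v) ∧
  (∀ w : Fin N, w ≠ s → w ≠ t →
    ∑ u ∈ univ.filter (· < w), x u w = ∑ v ∈ univ.filter (w < ·), x w v)

noncomputable def flowValue {N : ℕ} (s : Fin N) (x : Fin N → Fin N → ℝ) : ℝ :=
  ∑ v ∈ univ.filter (s < ·), x s v - ∑ u ∈ univ.filter (· < s), x u s

def IsWalk {V : Type*} (A : V → V → Prop) (k : ℕ) (f : Fin (k + 1) → V) : Prop :=
  ∀ i : Fin k, A (f i.castSucc) (f i.succ)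

def OnPath {V : Type*} (A : V → V → Prop) (k : ℕ) (s t a b : V) : Prop :=
  ∃ f : Fin (k + 1) → V, IsWalk A k f ∧ f 0 = s ∧ f (Fin.last k) = t ∧
    ∃ i : Fin k, f i.castSucc = a ∧ f i.succ = b

section P5dev

namespace SAS

inductive Rch {V : Type*} (A : V → V → Prop) : V → V → ℕ → Prop
  | refl (u : V) : Rch A u u 0
  | tail {u v w : V} {ℓ : ℕ} : Rch A u v ℓ → A v w → Rch A u w (ℓ + 1)

variable {V : Type*} {A : V → V → Prop} {u v w s t : V} {ℓ : ℕ}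

lemma Rch.head (h : A u v) (h2 : Rch A v w ℓ) : Rch A u w (ℓ + 1) := by
  induction h2 with
  | refl => exact (Rch.refl u).tail h
  | tail h3 h4 ih => exact ih.tail h4

lemma Rch.append {ℓ₂ : ℕ} (h : Rch A u v ℓ) (h2 : Rch A v w ℓ₂) :
    Rch A u w (ℓ + ℓ₂) := by
  induction h2 with
  | refl => exact h
  | tail h3 h4 ih => exact ih.tail h4

lemma Rch.zero_eq (h : Rch A u v 0) : u = v := by cases h; rfl

lemma Rch.succ_inv {ℓ : ℕ} (h : Rch A u w (ℓ + 1)) : ∃ v, Rch A u v ℓ ∧ A v w := by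
  cases h with
  | tail h3 h4 => exact ⟨_, h3, h4⟩

/-- walks give reachability between any two positions -/
lemma isWalk_rch {k : ℕ} {f : Fin (k + 1) → V} (hf : IsWalk A k f)
    (a : ℕ) (ha : a ≤ k) :
    ∀ c (hc : a + c ≤ k), Rch A (f ⟨a, by omega⟩) (f ⟨a + c, by omega⟩) c := by
  intro c
  induction c with
  | zero => intro _; exact Rch.refl _
  | succ c ih =>
    intro hc
    have hck : a + c ≤ k := by omega
    have h1 := ih hck
    have harc := hf ⟨a + c, by omega⟩
    have e1 : (Fin.castSucc ⟨a + c, by omega⟩ : Fin (k + 1)) = ⟨a + c, by omega⟩ := by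
      ext; simp
    have e2 : (Fin.succ ⟨a + c, by omega⟩ : Fin (k + 1)) = ⟨a + (c + 1), by omega⟩ := by
      ext; simp; omega
    rw [e1, e2] at harc
    exact h1.tail harc

lemma rch_of_walk {k : ℕ} {f : Fin (k + 1) → V} (hf : IsWalk A k f)
    (h0 : f 0 = s) (hl : f (Fin.last k) = t) : Rch A s t k := by
  have h := isWalk_rch hf 0 (Nat.zero_le _) k (by omega)
  have e0 : (⟨0, by omega⟩ : Fin (k + 1)) = 0 := by ext; simp
  have el : (⟨0 + k, by omega⟩ : Fin (k + 1)) = Fin.last k := by ext; simp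
  rw [e0, el, h0, hl] at h
  exact h

/-- reachability gives a walk -/
lemma walk_of_rch (h : Rch A s t ℓ) :
    ∃ f : Fin (ℓ + 1) → V, IsWalk A ℓ f ∧ f 0 = s ∧ f (Fin.last ℓ) = t := by
  induction h with
  | refl =>
    exact ⟨fun _ => s, fun i => absurd i.2 (by omega), rfl, rfl⟩
  | @tail v w ℓ h3 h4 ih =>
    obtain ⟨f, hf, hf0, hfl⟩ := ih
    refine ⟨Fin.snoc f w, ?_, ?_, ?_⟩
    · intro i
      rcases Nat.lt_or_ge i.val ℓ with hi | hi
      · have e1 : (i.castSucc : Fin (ℓ + 2)) = Fin.castSucc (Fin.castSucc ⟨i.val, hi⟩) := by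
          ext; simp
        have e2 : (i.succ : Fin (ℓ + 2)) = Fin.castSucc (Fin.succ ⟨i.val, hi⟩) := by
          ext; simp
        rw [e1, e2, Fin.snoc_castSucc, Fin.snoc_castSucc]
        exact hf ⟨i.val, hi⟩
      · have hi' : i.val = ℓ := by omega
        have e1 : (i.castSucc : Fin (ℓ + 2)) = Fin.castSucc (Fin.last ℓ) := by
          ext; simp [hi']
        have e2 : (i.succ : Fin (ℓ + 2)) = Fin.last (ℓ + 1) := by
          ext; simp [hi']
        rw [e1, e2, Fin.snoc_castSucc, Fin.snoc_last, hfl]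
        exact h4
    · have : ((0 : Fin (ℓ + 2))) = Fin.castSucc 0 := by ext; simp
      rw [this, Fin.snoc_castSucc, hf0]
    · rw [Fin.snoc_last]

end SAS
open Finset
section P2
variable {V : Type*} {A : V → V → Prop} {s t u v w : V} {ℓ : ℕ}
open SAS

noncomputable def dd (A : V → V → Prop) (s v : V) : ℕ∞ :=
  letI := Classical.dec
  if h : ∃ ℓ, Rch A s v ℓ then ((Nat.find h : ℕ) : ℕ∞) else ⊤

lemma dd_le (h : Rch A s v ℓ) : dd A s v ≤ (ℓ : ℕ∞) := by
  classical
  rw [dd]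
  split
  · next hex =>
    simp only [Nat.cast_le]
    exact Nat.find_le (by convert h)
  · next hex => exact absurd ⟨ℓ, h⟩ hex

lemma dd_spec {p : ℕ} (h : dd A s v = (p : ℕ∞)) : Rch A s v p := by
  classical
  rw [dd] at h
  split at h
  · next hex =>
    have := Nat.find_spec hex
    simp only [Nat.cast_inj] at h
    rwa [h] at this
  · simp at h

lemma dd_ne_top_iff : dd A s v ≠ ⊤ ↔ ∃ ℓ, Rch A s v ℓ := by
  classical
  rw [dd]
  split
  · next hex => simpa using hex
  · next hex => simpa using hex

lemma dd_exists_of_ne_top (h : dd A s v ≠ ⊤) :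
    ∃ p : ℕ, dd A s v = (p : ℕ∞) ∧ Rch A s v p := by
  classical
  rw [dd] at h ⊢
  split
  · next hex => exact ⟨_, rfl, Nat.find_spec hex⟩
  · next hex => rw [dif_neg hex] at h; exact absurd rfl h

lemma dd_exists_of_le {n : ℕ} (h : dd A s v ≤ (n : ℕ∞)) :
    ∃ p, p ≤ n ∧ dd A s v = (p : ℕ∞) ∧ Rch A s v p := by
  have hne : dd A s v ≠ ⊤ := by
    intro he; rw [he] at h; simp at h
  obtain ⟨p, hp⟩ := WithTop.ne_top_iff_exists.mp hne
  refine ⟨p, ?_, hp.symm, dd_spec hp.symm⟩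
  rw [← hp] at h
  exact WithTop.coe_le_coe.mp h

lemma dd_le_tail (hA : A u v) : dd A s v ≤ dd A s u + 1 := by
  rcases eq_or_ne (dd A s u) ⊤ with h | h
  · simp [h]
  · obtain ⟨p, hp⟩ := WithTop.ne_top_iff_exists.mp h
    have := (dd_spec hp.symm).tail hA
    calc dd A s v ≤ ((p + 1 : ℕ) : ℕ∞) := dd_le this
    _ = dd A s u + 1 := by rw [← hp]; push_cast; rfl

/-- a finite distance is at most `card V - 1` -/
lemma dd_le_card [Fintype V] {p : ℕ} (h : dd A s v = (p : ℕ∞)) :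
    p + 1 ≤ Fintype.card V := by
  have pred : ∀ q (w : V), dd A s w = ((q + 1 : ℕ) : ℕ∞) → ∃ u, dd A s u = (q : ℕ∞) := by
    intro q w hw
    obtain ⟨u, hu, hA⟩ := (dd_spec hw).succ_inv
    have h1 : dd A s u ≤ (q : ℕ∞) := dd_le hu
    obtain ⟨q', hq', he, _⟩ := dd_exists_of_le h1
    have h2 : dd A s w ≤ dd A s u + 1 := dd_le_tail hA
    rw [hw, he] at h2
    have : q + 1 ≤ q' + 1 := by exact_mod_cast h2
    have : q' = q := by omega
    exact ⟨u, by rw [he, this]⟩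
  have hex : ∀ i, i ≤ p → ∃ u, dd A s u = (i : ℕ∞) := by
    have key : ∀ c, c ≤ p → ∃ u, dd A s u = ((p - c : ℕ) : ℕ∞) := by
      intro c
      induction c with
      | zero => intro _; exact ⟨v, by simp only [Nat.sub_zero]; exact h⟩
      | succ c ih =>
        intro hc
        obtain ⟨u, hu⟩ := ih (by omega)
        have he : p - c = (p - (c + 1)) + 1 := by omega
        rw [he] at hu
        obtain ⟨u', hu'⟩ := pred _ _ hu
        exact ⟨u', hu'⟩
    intro i hi
    obtain ⟨u, hu⟩ := key (p - i) (by omega)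
    exact ⟨u, by rwa [Nat.sub_sub_self hi] at hu⟩
  have hinj : ∃ g : Fin (p + 1) → V, Function.Injective g := by
    choose g hg using fun i : Fin (p + 1) => hex i.val (by omega)
    refine ⟨g, fun i j hij => ?_⟩
    have hgi := hg i
    have hgj := hg j
    rw [hij] at hgi
    have h2 : ((i.val : ℕ) : ℕ∞) = ((j.val : ℕ) : ℕ∞) := hgi.symm.trans hgj
    have : i.val = j.val := by exact_mod_cast h2
    exact Fin.ext this
  obtain ⟨g, hg⟩ := hinj
  simpa using Fintype.card_le_of_injective g hg

end P2
section P3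
open SAS

namespace SAS

def Ares {N : ℕ} (ν x : Fin N → Fin N → ℝ) : Fin N → Fin N → Prop :=
  fun u v => 0 < resCap ν x u v

variable {N : ℕ} {s t u v w : Fin N} {ν x x' : Fin N → Fin N → ℝ} {k ℓ : ℕ}

lemma resCap_self : resCap ν x u u = 0 := by simp [resCap]

lemma resCap_nonneg (hx : IsFeasibleFlow s t ν x) (u v : Fin N) :
    0 ≤ resCap ν x u v := by
  unfold resCap
  rcases lt_trichotomy u v with h | h | h
  · rw [if_pos h]
    have := (hx.1 u v h).2
    linarith
  · subst h; simp
  · rw [if_neg (asymm h), if_pos h]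
    have := (hx.1 v u h).1
    linarith

lemma Ares_ne (h : Ares ν x u v) : u ≠ v := by
  intro he; subst he
  exact absurd h (by simp [Ares, resCap_self])

lemma rch_flip {V : Type*} {A : V → V → Prop} {u v : V} (h : Rch A u v ℓ) :
    Rch (fun a b => A b a) v u ℓ := by
  induction h with
  | refl => exact Rch.refl _
  | tail h3 h4 ih => exact Rch.head h4 ih

noncomputable def ee {V : Type*} (A : V → V → Prop) (t w : V) : ℕ∞ :=
  dd (fun a b => A b a) t w

lemma ee_le {V : Type*} {A : V → V → Prop} {t w : V} (h : Rch A w t ℓ) :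
    ee A t w ≤ (ℓ : ℕ∞) := dd_le (rch_flip h)

lemma ee_exists_of_le {V : Type*} {A : V → V → Prop} {t w : V} {n : ℕ}
    (h : ee A t w ≤ (n : ℕ∞)) :
    ∃ q, q ≤ n ∧ ee A t w = (q : ℕ∞) ∧ Rch A w t q := by
  obtain ⟨q, hq, he, hr⟩ := dd_exists_of_le h
  exact ⟨q, hq, he, rch_flip hr⟩

lemma ee_exists_of_ne_top {V : Type*} {A : V → V → Prop} {t w : V}
    (h : ee A t w ≠ ⊤) : ∃ q : ℕ, ee A t w = (q : ℕ∞) ∧ Rch A w t q := by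
  obtain ⟨q, he, hr⟩ := dd_exists_of_ne_top h
  exact ⟨q, he, rch_flip hr⟩

lemma onPath_parts {a b : Fin N} {A : Fin N → Fin N → Prop}
    (h : OnPath A k s t a b) :
    ∃ p, p < k ∧ Rch A s a p ∧ A a b ∧ Rch A b t (k - 1 - p) := by
  obtain ⟨f, hw, h0, hl, i, ha, hb⟩ := h
  refine ⟨i.val, i.2, ?_, ?_, ?_⟩
  · have h := isWalk_rch hw 0 (Nat.zero_le _) i.val (by omega)
    have e0 : (⟨0, by omega⟩ : Fin (k + 1)) = 0 := by ext; simp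
    have e1 : (⟨0 + i.val, by omega⟩ : Fin (k + 1)) = i.castSucc := by ext; simp
    rwa [e0, e1, h0, ha] at h
  · have := hw i
    rwa [ha, hb] at this
  · have h := isWalk_rch hw (i.val + 1) (by omega) (k - (i.val + 1)) (by omega)
    have e1 : (⟨i.val + 1, by omega⟩ : Fin (k + 1)) = i.succ := by ext; simp
    have e2 : (⟨i.val + 1 + (k - (i.val + 1)), by omega⟩ : Fin (k + 1)) = Fin.last k := by
      ext; simp
    have e3 : k - (i.val + 1) = k - 1 - i.val := by omega
    rwa [e1, e2, hb, hl, e3] at h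

lemma main_step (hk : 1 ≤ k)
    (hfeas : IsFeasibleFlow s t ν x)
    (hcap : ∀ u v : Fin N, u < v →
      -resCap ν x v u ≤ x' u v - x u v ∧ x' u v - x u v ≤ resCap ν x u v)
    (hsupp : ∀ u v : Fin N, u < v →
      (0 < x' u v - x u v → OnPath (Ares ν x) k s t u v) ∧
      (x' u v - x u v < 0 → OnPath (Ares ν x) k s t v u))
    (hdist : ∀ ℓ < k, ¬ Rch (Ares ν x) s t ℓ) :
    (∀ ℓ < k, ¬ Rch (Ares ν x') s t ℓ) ∧
    (∀ a b : Fin N, OnPath (Ares ν x') k s t a b → OnPath (Ares ν x) k s t a b) := by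
  set A := Ares ν x with hA
  set A' := Ares ν x' with hA'
  have klem : ∀ (w : Fin N) p q, Rch A s w p → Rch A w t q → k ≤ p + q := by
    intro w p q h1 h2
    by_contra hlt
    exact hdist _ (by omega) (h1.append h2)
  have dicho : ∀ u v : Fin N, A' u v →
      A u v ∨ ∃ p, p < k ∧ Rch A s v p ∧ Rch A u t (k - 1 - p) := by
    intro u v hA'uv
    by_cases hold : A u v
    · exact Or.inl hold
    · right
      have hne : u ≠ v := Ares_ne hA'uv
      have h0 : resCap ν x u v = 0 :=
        le_antisymm (not_lt.mp hold) (resCap_nonneg hfeas u v)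
      have hOP : OnPath A k s t v u := by
        rcases lt_trichotomy u v with h | h | h
        · have h1 : ν u v - x u v = 0 := by rwa [resCap, if_pos h] at h0
          have h2' : 0 < resCap ν x' u v := hA'uv
          have h2 : 0 < ν u v - x' u v := by
            rwa [resCap, if_pos h] at h2'
          exact (hsupp u v h).2 (by linarith)
        · exact absurd h hne
        · have h1 : ν u v + x v u = 0 := by
            rwa [resCap, if_neg (asymm h), if_pos h] at h0
          have h2' : 0 < resCap ν x' u v := hA'uv
          have h2 : 0 < ν u v + x' v u := by
            rwa [resCap, if_neg (asymm h), if_pos h] at h2'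
          exact (hsupp v u h).1 (by linarith)
      obtain ⟨p, hp, h1, _, h2⟩ := onPath_parts hOP
      exact ⟨p, hp, h1, h2⟩
  have arc_d : ∀ u v : Fin N, A' u v → dd A s v ≤ dd A s u + 1 := by
    intro u v hA'uv
    rcases dicho u v hA'uv with hold | ⟨p, hp, h1, h2⟩
    · exact dd_le_tail hold
    · have hdv : dd A s v ≤ (p : ℕ∞) := dd_le h1
      have hstep : (p : ℕ∞) ≤ dd A s u + 1 := by
        rcases eq_or_ne (dd A s u) ⊤ with htop | htop
        · rw [htop]; simp
        · obtain ⟨q, hq, hr⟩ := dd_exists_of_ne_top htop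
          have := klem u q (k - 1 - p) hr h2
          have hpq : p ≤ q + 1 := by omega
          calc (p : ℕ∞) ≤ ((q + 1 : ℕ) : ℕ∞) := by exact_mod_cast hpq
          _ = (q : ℕ∞) + 1 := by push_cast; rfl
          _ = dd A s u + 1 := by rw [hq]
      exact le_trans hdv hstep
  have arc_e : ∀ u v : Fin N, A' u v → ee A t u ≤ ee A t v + 1 := by
    intro u v hA'uv
    rcases dicho u v hA'uv with hold | ⟨p, hp, h1, h2⟩
    · rcases eq_or_ne (ee A t v) ⊤ with htop | htop
      · rw [htop]; simp
      · obtain ⟨q, hq, hr⟩ := ee_exists_of_ne_top htop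
        have : Rch A u t (q + 1) := Rch.head hold hr
        calc ee A t u ≤ ((q + 1 : ℕ) : ℕ∞) := ee_le this
        _ = (q : ℕ∞) + 1 := by push_cast; rfl
        _ = ee A t v + 1 := by rw [hq]
    · have heu : ee A t u ≤ ((k - 1 - p : ℕ) : ℕ∞) := ee_le h2
      have hstep : ((k - 1 - p : ℕ) : ℕ∞) ≤ ee A t v + 1 := by
        rcases eq_or_ne (ee A t v) ⊤ with htop | htop
        · rw [htop]; simp
        · obtain ⟨q, hq, hr⟩ := ee_exists_of_ne_top htop
          have := klem v p q h1 hr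
          have h5 : k - 1 - p ≤ q + 1 := by omega
          calc ((k - 1 - p : ℕ) : ℕ∞) ≤ ((q + 1 : ℕ) : ℕ∞) := by exact_mod_cast h5
          _ = (q : ℕ∞) + 1 := by push_cast; rfl
          _ = ee A t v + 1 := by rw [hq]
      exact le_trans heu hstep
  have claim_d : ∀ (w : Fin N) ℓ, Rch A' s w ℓ → dd A s w ≤ (ℓ : ℕ∞) := by
    intro w ℓ h
    induction h with
    | refl => exact dd_le (Rch.refl s)
    | @tail v w ℓ h3 h4 ih =>
      calc dd A s w ≤ dd A s v + 1 := arc_d v w h4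
      _ ≤ (ℓ : ℕ∞) + 1 := by exact_mod_cast add_le_add ih (le_refl 1)
      _ = ((ℓ + 1 : ℕ) : ℕ∞) := by push_cast; rfl
  constructor
  · intro ℓ hℓ h
    obtain ⟨q, hq, _, hr⟩ := dd_exists_of_le (claim_d t ℓ h)
    exact hdist q (by omega) hr
  · intro a b hOP
    obtain ⟨f, hw', h0, hl, i, ha, hb⟩ := hOP
    have cl1 : ∀ n (hn : n ≤ k), dd A s (f ⟨n, by omega⟩) ≤ (n : ℕ∞) := by
      intro n
      induction n with
      | zero =>
        intro _
        have : (⟨0, by omega⟩ : Fin (k + 1)) = 0 := by ext; simp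
        rw [this, h0]
        exact dd_le (Rch.refl s)
      | succ n ih =>
        intro hn
        have harc := hw' ⟨n, by omega⟩
        have e1 : (Fin.castSucc ⟨n, by omega⟩ : Fin (k + 1)) = ⟨n, by omega⟩ := by ext; simp
        have e2 : (Fin.succ ⟨n, by omega⟩ : Fin (k + 1)) = ⟨n + 1, by omega⟩ := by ext; simp
        rw [e1, e2] at harc
        calc dd A s (f ⟨n + 1, by omega⟩) ≤ dd A s (f ⟨n, by omega⟩) + 1 := arc_d _ _ harc
        _ ≤ (n : ℕ∞) + 1 := by exact_mod_cast add_le_add (ih (by omega)) (le_refl 1)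
        _ = ((n + 1 : ℕ) : ℕ∞) := by push_cast; rfl
    have cl2 : ∀ c (hc : c ≤ k), ee A t (f ⟨k - c, by omega⟩) ≤ (c : ℕ∞) := by
      intro c
      induction c with
      | zero =>
        intro _
        have : (⟨k - 0, by omega⟩ : Fin (k + 1)) = Fin.last k := by ext; simp
        rw [this, hl]
        exact ee_le (Rch.refl t)
      | succ c ih =>
        intro hc
        have harc := hw' ⟨k - (c + 1), by omega⟩
        have e1 : (Fin.castSucc ⟨k - (c + 1), by omega⟩ : Fin (k + 1))
            = ⟨k - (c + 1), by omega⟩ := by ext; simp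
        have e2 : (Fin.succ ⟨k - (c + 1), by omega⟩ : Fin (k + 1)) = ⟨k - c, by omega⟩ := by
          ext; simp; omega
        rw [e1, e2] at harc
        calc ee A t (f ⟨k - (c + 1), by omega⟩) ≤ ee A t (f ⟨k - c, by omega⟩) + 1 := arc_e _ _ harc
        _ ≤ (c : ℕ∞) + 1 := by exact_mod_cast add_le_add (ih (by omega)) (le_refl 1)
        _ = ((c + 1 : ℕ) : ℕ∞) := by push_cast; rfl
    have cl3 : ∀ n (hn : n ≤ k), dd A s (f ⟨n, by omega⟩) = (n : ℕ∞) ∧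
        ee A t (f ⟨n, by omega⟩) = ((k - n : ℕ) : ℕ∞) := by
      intro n hn
      have h1 := cl1 n hn
      have h2' := cl2 (k - n) (by omega)
      have eidx : (⟨k - (k - n), by omega⟩ : Fin (k + 1)) = ⟨n, by omega⟩ := by
        ext; simp; omega
      rw [eidx] at h2'
      obtain ⟨p, hp, hdp, hrp⟩ := dd_exists_of_le h1
      obtain ⟨q, hq, heq, hrq⟩ := ee_exists_of_le h2'
      have := klem _ p q hrp hrq
      have hpn : p = n := by omega
      have hqn : q = k - n := by omega
      exact ⟨by rw [hdp, hpn], by rw [heq, hqn]⟩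
    have hwalk : IsWalk A k f := by
      intro i'
      have harc := hw' i'
      rcases dicho _ _ harc with hold | ⟨p, hp, h1, h2⟩
      · exact hold
      · exfalso
        have ei1 : (i'.succ : Fin (k + 1)) = ⟨i'.val + 1, by omega⟩ := by ext; simp
        have ei2 : (i'.castSucc : Fin (k + 1)) = ⟨i'.val, by omega⟩ := by ext; simp
        rw [ei1] at h1
        rw [ei2] at h2
        have hd1 : dd A s (f ⟨i'.val + 1, by omega⟩) ≤ (p : ℕ∞) := dd_le h1
        have he1 : ee A t (f ⟨i'.val, by omega⟩) ≤ ((k - 1 - p : ℕ) : ℕ∞) := ee_le h2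
        rw [(cl3 (i'.val + 1) (by omega)).1] at hd1
        rw [(cl3 i'.val (by omega)).2] at he1
        have hd2 : i'.val + 1 ≤ p := by exact_mod_cast hd1
        have he2 : k - i'.val ≤ k - 1 - p := by exact_mod_cast he1
        have := i'.2
        omega
    exact ⟨f, hwalk, h0, hl, i, ha, hb⟩

end SAS
end P3
section P4
open SAS

namespace SAS

variable {N : ℕ} {s t : Fin N} {ν z : Fin N → Fin N → ℝ}

lemma cut_value (hz : IsFeasibleFlow s t ν z) (R : Finset (Fin N))
    (hs : s ∈ R) (ht : t ∉ R) :
    flowValue s z =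
      (∑ p ∈ univ.filter (fun p : Fin N × Fin N => p.1 ∈ R ∧ p.2 ∉ R ∧ p.1 < p.2),
        z p.1 p.2)
      - ∑ p ∈ univ.filter (fun p : Fin N × Fin N => p.1 ∉ R ∧ p.2 ∈ R ∧ p.1 < p.2),
        z p.1 p.2 := by
  classical
  have hFs : flowValue s z =
      ∑ w ∈ R, ((∑ v ∈ univ.filter (w < ·), z w v) - ∑ u ∈ univ.filter (· < w), z u w) := by
    rw [Finset.sum_eq_single_of_mem s hs]
    · rfl
    · intro w hw hws
      have hwt : w ≠ t := fun h => ht (h ▸ hw)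
      have := hz.2 w hws hwt
      linarith
  have hA : ∑ w ∈ R, ∑ v ∈ univ.filter (w < ·), z w v
      = ∑ p ∈ (univ : Finset (Fin N × Fin N)),
          if p.1 ∈ R ∧ p.1 < p.2 then z p.1 p.2 else 0 := by
    have e1 : ∀ a : Fin N, (if a ∈ R then ∑ v ∈ univ.filter (a < ·), z a v else 0)
        = ∑ b ∈ univ, (if a ∈ R ∧ a < b then z a b else 0) := by
      intro a
      by_cases haR : a ∈ R
      · simp only [haR, if_true, true_and, Finset.sum_filter]
      · simp [haR]
    calc ∑ w ∈ R, ∑ v ∈ univ.filter (w < ·), z w v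
        = ∑ w ∈ univ ∩ R, ∑ v ∈ univ.filter (w < ·), z w v := by rw [Finset.univ_inter]
      _ = ∑ w ∈ univ, if w ∈ R then ∑ v ∈ univ.filter (w < ·), z w v else 0 :=
          (Finset.sum_ite_mem univ R _).symm
      _ = ∑ w ∈ univ, ∑ v ∈ univ, (if w ∈ R ∧ w < v then z w v else 0) :=
          Finset.sum_congr rfl (fun a _ => e1 a)
      _ = ∑ p ∈ univ ×ˢ univ, (if p.1 ∈ R ∧ p.1 < p.2 then z p.1 p.2 else 0) :=
          (Finset.sum_product univ univ (fun p : Fin N × Fin N =>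
            if p.1 ∈ R ∧ p.1 < p.2 then z p.1 p.2 else 0)).symm
      _ = _ := by rw [Finset.univ_product_univ]
  have hB : ∑ w ∈ R, ∑ u ∈ univ.filter (· < w), z u w
      = ∑ p ∈ (univ : Finset (Fin N × Fin N)),
          if p.2 ∈ R ∧ p.1 < p.2 then z p.1 p.2 else 0 := by
    have e1 : ∀ b : Fin N, (if b ∈ R then ∑ u ∈ univ.filter (· < b), z u b else 0)
        = ∑ a ∈ univ, (if b ∈ R ∧ a < b then z a b else 0) := by
      intro b
      by_cases hbR : b ∈ R
      · simp only [hbR, if_true, true_and, Finset.sum_filter]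
      · simp [hbR]
    calc ∑ w ∈ R, ∑ u ∈ univ.filter (· < w), z u w
        = ∑ w ∈ univ ∩ R, ∑ u ∈ univ.filter (· < w), z u w := by rw [Finset.univ_inter]
      _ = ∑ w ∈ univ, if w ∈ R then ∑ u ∈ univ.filter (· < w), z u w else 0 :=
          (Finset.sum_ite_mem univ R _).symm
      _ = ∑ w ∈ univ, ∑ u ∈ univ, (if w ∈ R ∧ u < w then z u w else 0) :=
          Finset.sum_congr rfl (fun b _ => e1 b)
      _ = ∑ u ∈ univ, ∑ w ∈ univ, (if w ∈ R ∧ u < w then z u w else 0) := Finset.sum_comm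
      _ = ∑ p ∈ univ ×ˢ univ, (if p.2 ∈ R ∧ p.1 < p.2 then z p.1 p.2 else 0) :=
          (Finset.sum_product univ univ (fun p : Fin N × Fin N =>
            if p.2 ∈ R ∧ p.1 < p.2 then z p.1 p.2 else 0)).symm
      _ = _ := by rw [Finset.univ_product_univ]
  have hsplit1 : ∀ p : Fin N × Fin N,
      (if p.1 ∈ R ∧ p.1 < p.2 then z p.1 p.2 else 0)
      = (if p.1 ∈ R ∧ p.2 ∈ R ∧ p.1 < p.2 then z p.1 p.2 else 0)
        + (if p.1 ∈ R ∧ p.2 ∉ R ∧ p.1 < p.2 then z p.1 p.2 else 0) := by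
    intro p
    by_cases h1 : p.1 ∈ R <;> by_cases h2 : p.2 ∈ R <;> by_cases h3 : p.1 < p.2 <;>
      simp [h1, h2, h3]
  have hsplit2 : ∀ p : Fin N × Fin N,
      (if p.2 ∈ R ∧ p.1 < p.2 then z p.1 p.2 else 0)
      = (if p.1 ∈ R ∧ p.2 ∈ R ∧ p.1 < p.2 then z p.1 p.2 else 0)
        + (if p.1 ∉ R ∧ p.2 ∈ R ∧ p.1 < p.2 then z p.1 p.2 else 0) := by
    intro p
    by_cases h1 : p.1 ∈ R <;> by_cases h2 : p.2 ∈ R <;> by_cases h3 : p.1 < p.2 <;>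
      simp [h1, h2, h3]
  rw [hFs, Finset.sum_sub_distrib, hA, hB,
    Finset.sum_congr rfl (fun p _ => hsplit1 p),
    Finset.sum_congr rfl (fun p _ => hsplit2 p),
    Finset.sum_add_distrib, Finset.sum_add_distrib]
  rw [Finset.sum_filter, Finset.sum_filter]
  ring

end SAS
end P4

section P5
open SAS

/-- Theorem 7 of the paper (correctness of Algorithm 3): starting from the zero
flow, if for each phase `k = 1, …, N-1` one performs `m` augmentations, each along
a flow supported on arcs lying on `s`-`t`-paths of length exactly `k` in the
current residual network and saturating at least one such arc whenever one exists,
then the resulting flow is a maximum `s`-`t`-flow. Here `m` is (an upper bound on)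
the number of arcs, and step `j` belongs to phase `k = j / m + 1`. -/
theorem shortest_augmentation_scheme_gives_maxflow (N m : ℕ) (s t : Fin N)
    (hst : s ≠ t) (ν : Fin N → Fin N → ℝ) (hν : ∀ u v, 0 ≤ ν u v)
    (hm : (univ.filter (fun p : Fin N × Fin N => 0 < ν p.1 p.2 ∨ 0 < ν p.2 p.1)).card ≤ m)
    (x : ℕ → Fin N → Fin N → ℝ)
    (h0 : ∀ u v, x 0 u v = 0)
    (hstep : ∀ j < (N - 1) * m,
      let k := j / m + 1
      let A : Fin N → Fin N → Prop := fun u v => 0 < resCap ν (x j) u v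
      let y : Fin N → Fin N → ℝ := fun u v => x (j + 1) u v - x j u v
      (∀ u v : Fin N, u < v →
        -resCap ν (x j) v u ≤ y u v ∧ y u v ≤ resCap ν (x j) u v) ∧
      (∀ w : Fin N, w ≠ s → w ≠ t →
        ∑ u ∈ univ.filter (· < w), y u w = ∑ v ∈ univ.filter (w < ·), y w v) ∧
      (∀ u v : Fin N, u < v →
        (0 < y u v → OnPath A k s t u v) ∧ (y u v < 0 → OnPath A k s t v u)) ∧
      ((∃ a b : Fin N, OnPath A k s t a b) → ∃ a b : Fin N, OnPath A k s t a b ∧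
        (if a < b then y a b = resCap ν (x j) a b else -(y b a) = resCap ν (x j) a b))) :
    IsFeasibleFlow s t ν (x ((N - 1) * m)) ∧
    ∀ x' : Fin N → Fin N → ℝ, IsFeasibleFlow s t ν x' →
      flowValue s x' ≤ flowValue s (x ((N - 1) * m)) := by
  classical
  -- trivial case m = 0
  by_cases hm0 : m = 0
  · subst hm0
    rw [Nat.mul_zero] at *
    have hν0 : ∀ u v : Fin N, ν u v = 0 := by
      intro u v
      by_contra hne
      have hpos : 0 < ν u v := lt_of_le_of_ne (hν u v) (Ne.symm hne)
      have hmem : (u, v) ∈ univ.filter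
          (fun p : Fin N × Fin N => 0 < ν p.1 p.2 ∨ 0 < ν p.2 p.1) := by
        simp [Finset.mem_filter, hpos]
      have : (univ.filter
          (fun p : Fin N × Fin N => 0 < ν p.1 p.2 ∨ 0 < ν p.2 p.1)) = ∅ :=
        Finset.card_eq_zero.mp (Nat.le_zero.mp hm)
      rw [this] at hmem
      exact absurd hmem (Finset.notMem_empty _)
    have hfeas0 : IsFeasibleFlow s t ν (x 0) := by
      constructor
      · intro u v huv
        rw [h0, hν0, hν0]
        norm_num
      · intro w _ _
        simp [h0]
    refine ⟨hfeas0, ?_⟩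
    intro x' hx'
    have hx'0 : ∀ u v : Fin N, u < v → x' u v = 0 := by
      intro u v huv
      have h1 := (hx'.1 u v huv).1
      have h2 := (hx'.1 u v huv).2
      rw [hν0] at h2
      rw [hν0] at h1
      linarith
    have hv1 : flowValue s x' = 0 := by
      unfold flowValue
      rw [Finset.sum_eq_zero, Finset.sum_eq_zero]
      · ring
      · intro u hu
        exact hx'0 u s (Finset.mem_filter.mp hu).2
      · intro v hv
        exact hx'0 s v (Finset.mem_filter.mp hv).2
    have hv2 : flowValue s (x 0) = 0 := by
      unfold flowValue
      rw [Finset.sum_eq_zero (fun v _ => h0 s v), Finset.sum_eq_zero (fun u _ => h0 u s)]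
      ring
    rw [hv1, hv2]
  -- main case
  have hmpos : 1 ≤ m := Nat.one_le_iff_ne_zero.mpr hm0
  have hN2 : 2 ≤ N := by
    rcases Nat.lt_or_ge N 2 with h | h
    · exfalso
      apply hst
      have h1 := s.2
      have h2 := t.2
      exact Fin.ext (by omega)
    · exact h
  -- feasibility along the way
  have feas : ∀ j, j ≤ (N - 1) * m → IsFeasibleFlow s t ν (x j) := by
    intro j
    induction j with
    | zero =>
      intro _
      constructor
      · intro u v huv
        rw [h0]
        exact ⟨neg_nonpos.mpr (hν v u), hν u v⟩
      · intro w _ _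
        simp [h0]
    | succ j ih =>
      intro hj
      have hfj := ih (by omega)
      obtain ⟨hcap, hcons, hsupp, hsat⟩ := hstep j (by omega)
      simp only at hcap hcons hsupp hsat
      constructor
      · intro u v huv
        have h1 := hcap u v huv
        have h2 := hfj.1 u v huv
        have e1 : resCap ν (x j) u v = ν u v - x j u v := by
          rw [resCap, if_pos huv]
        have e2 : resCap ν (x j) v u = ν v u + x j u v := by
          rw [resCap, if_neg (asymm huv), if_pos huv]
        rw [e1, e2] at h1
        constructor <;> [linarith [h1.1]; linarith [h1.2]]
      · intro w hws hwt
        have hc := hcons w hws hwt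
        have hcj := hfj.2 w hws hwt
        have e1 : ∑ u ∈ univ.filter (· < w), x (j + 1) u w
            = (∑ u ∈ univ.filter (· < w), x j u w)
              + ∑ u ∈ univ.filter (· < w), (x (j + 1) u w - x j u w) := by
          rw [← Finset.sum_add_distrib]
          exact Finset.sum_congr rfl (fun u _ => by ring)
        have e2 : ∑ v ∈ univ.filter (w < ·), x (j + 1) w v
            = (∑ v ∈ univ.filter (w < ·), x j w v)
              + ∑ v ∈ univ.filter (w < ·), (x (j + 1) w v - x j w v) := by
          rw [← Finset.sum_add_distrib]
          exact Finset.sum_congr rfl (fun v _ => by ring)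
        rw [e1, e2, hcj, hc]
  -- the phase induction
  have phase : ∀ k, k ≤ N - 1 → ∀ ℓ, ℓ < k + 1 → ¬ Rch (Ares ν (x (k * m))) s t ℓ := by
    intro k
    induction k with
    | zero =>
      intro _ ℓ hℓ hr
      have hℓ0 : ℓ = 0 := by omega
      subst hℓ0
      rw [Nat.zero_mul] at hr
      exact hst hr.zero_eq
    | succ k ih =>
      intro hk
      have hdist0 : ∀ ℓ < k + 1, ¬ Rch (Ares ν (x (k * m))) s t ℓ := by
        intro ℓ hℓ
        exact ih (by omega) ℓ hℓ
      set S : ℕ → Finset (Fin N × Fin N) := fun j =>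
        univ.filter (fun p : Fin N × Fin N => OnPath (Ares ν (x j)) (k + 1) s t p.1 p.2)
        with hS
      have hmemS : ∀ j (p : Fin N × Fin N),
          p ∈ S j ↔ OnPath (Ares ν (x j)) (k + 1) s t p.1 p.2 := by
        intro j p
        rw [hS]
        simp
      have inner : ∀ r, r ≤ m →
          (∀ ℓ < k + 1, ¬ Rch (Ares ν (x (k * m + r))) s t ℓ) ∧
          ((S (k * m + r)).card + r ≤ m ∨ S (k * m + r) = ∅) := by
        intro r
        induction r with
        | zero =>
          intro _
          refine ⟨by simpa using hdist0, Or.inl ?_⟩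
          rw [Nat.add_zero]
          have hsub : S (k * m) ⊆ univ.filter
              (fun p : Fin N × Fin N => 0 < ν p.1 p.2 ∨ 0 < ν p.2 p.1) := by
            intro p hp
            have hOP := (hmemS _ p).mp hp
            obtain ⟨_, _, _, hA, _⟩ := onPath_parts hOP
            have hfeasj : IsFeasibleFlow s t ν (x (k * m)) := by
              apply feas
              exact Nat.mul_le_mul_right m (by omega)
            have hrc : 0 < resCap ν (x (k * m)) p.1 p.2 := hA
            simp only [Finset.mem_filter, Finset.mem_univ, true_and]
            by_contra hcon
            push_neg at hcon
            have hν1 : ν p.1 p.2 = 0 := le_antisymm hcon.1 (hν _ _)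
            have hν2 : ν p.2 p.1 = 0 := le_antisymm hcon.2 (hν _ _)
            rcases lt_trichotomy p.1 p.2 with h | h | h
            · rw [resCap, if_pos h] at hrc
              have := (hfeasj.1 p.1 p.2 h).1
              rw [hν2] at this
              linarith [hrc, this, hν1.le]
            · rw [show p.2 = p.1 from h.symm] at hrc
              rw [resCap_self] at hrc
              exact lt_irrefl 0 hrc
            · rw [resCap, if_neg (asymm h), if_pos h] at hrc
              have := (hfeasj.1 p.2 p.1 h).2
              linarith [hrc, this, hν1.le, hν2.le]
          simpa using le_trans (Finset.card_le_card hsub) hm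
        | succ r ihr =>
          intro hr
          obtain ⟨hd, hcard⟩ := ihr (by omega)
          have hjT : k * m + r < (N - 1) * m := by
            calc k * m + r < k * m + m := by omega
            _ = (k + 1) * m := (Nat.succ_mul k m).symm
            _ ≤ (N - 1) * m := Nat.mul_le_mul_right m (by omega)
          have hdiv : (k * m + r) / m + 1 = k + 1 := by
            rw [show k * m + r = m * k + r by ring, Nat.mul_add_div hmpos,
              Nat.div_eq_of_lt (by omega)]
          obtain ⟨hcap, hcons, hsupp, hsat⟩ := hstep (k * m + r) hjT
          simp only at hcap hcons hsupp hsat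
          rw [hdiv] at hsupp hsat
          have hfj := feas (k * m + r) (le_of_lt hjT)
          have hms := main_step (x := x (k * m + r)) (x' := x (k * m + r + 1))
            (k := k + 1) (by omega) hfj hcap hsupp hd
          have hsubset : S (k * m + r + 1) ⊆ S (k * m + r) := by
            intro p hp
            exact (hmemS _ p).mpr (hms.2 p.1 p.2 ((hmemS _ p).mp hp))
          refine ⟨?_, ?_⟩
          · intro ℓ hℓ
            have := hms.1 ℓ hℓ
            exact this
          · rcases hcard with hc | hc
            · by_cases hSe : S (k * m + r) = ∅
              · right
                rw [show k * m + (r + 1) = k * m + r + 1 by omega]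
                rw [hSe] at hsubset
                exact Finset.subset_empty.mp hsubset
              · left
                obtain ⟨p, hp⟩ := Finset.nonempty_iff_ne_empty.mpr hSe
                obtain ⟨a, b, hab, hsatc⟩ := hsat ⟨p.1, p.2, (hmemS _ p).mp hp⟩
                obtain ⟨_, _, _, hAab, _⟩ := onPath_parts hab
                have hne : a ≠ b := Ares_ne hAab
                have hzero : resCap ν (x (k * m + r + 1)) a b = 0 := by
                  rcases lt_trichotomy a b with h | h | h
                  · rw [if_pos h] at hsatc
                    rw [resCap, if_pos h]
                    rw [resCap, if_pos h] at hsatc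
                    linarith [hsatc]
                  · exact absurd h hne
                  · rw [if_neg (asymm h)] at hsatc
                    rw [resCap, if_neg (asymm h), if_pos h]
                    rw [resCap, if_neg (asymm h), if_pos h] at hsatc
                    linarith [hsatc]
                have hmem1 : (a, b) ∈ S (k * m + r) := (hmemS _ _).mpr hab
                have hmem2 : (a, b) ∉ S (k * m + r + 1) := by
                  intro hmem
                  have hOP := (hmemS _ _).mp hmem
                  obtain ⟨_, _, _, hA2, _⟩ := onPath_parts hOP
                  have h2' : 0 < resCap ν (x (k * m + r + 1)) a b := hA2
                  rw [hzero] at h2'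
                  exact lt_irrefl 0 h2'
                have hlt : (S (k * m + r + 1)).card < (S (k * m + r)).card :=
                  Finset.card_lt_card ((Finset.ssubset_iff_of_subset hsubset).mpr
                    ⟨(a, b), hmem1, hmem2⟩)
                rw [show k * m + (r + 1) = k * m + r + 1 by omega]
                omega
            · right
              rw [show k * m + (r + 1) = k * m + r + 1 by omega]
              rw [hc] at hsubset
              exact Finset.subset_empty.mp hsubset
      obtain ⟨hd, hcard⟩ := inner m le_rfl
      have hSempty : S (k * m + m) = ∅ := by
        rcases hcard with hc | hc
        · exact Finset.card_eq_zero.mp (by omega)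
        · exact hc
      intro ℓ hℓ hrch
      rw [Nat.succ_mul] at hrch
      rcases Nat.lt_or_ge ℓ (k + 1) with h | h
      · exact hd ℓ h hrch
      · have hℓk : ℓ = k + 1 := by omega
        subst hℓk
        obtain ⟨f, hw, hf0, hfl⟩ := walk_of_rch hrch
        have hOP : OnPath (Ares ν (x (k * m + m))) (k + 1) s t
            (f (Fin.castSucc ⟨0, by omega⟩)) (f (Fin.succ ⟨0, by omega⟩)) :=
          ⟨f, hw, hf0, hfl, ⟨0, by omega⟩, rfl, rfl⟩
        have : (f (Fin.castSucc ⟨0, by omega⟩), f (Fin.succ ⟨0, by omega⟩))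
            ∈ S (k * m + m) := (hmemS _ _).mpr hOP
        rw [hSempty] at this
        exact absurd this (Finset.notMem_empty _)
  -- final residual network has no augmenting path at all
  have hfin := phase (N - 1) le_rfl
  have hnoreach : ¬ ∃ ℓ, Rch (Ares ν (x ((N - 1) * m))) s t ℓ := by
    rintro ⟨ℓ, hr⟩
    obtain ⟨p, _, hdp, hrp⟩ := dd_exists_of_le (dd_le hr)
    have hcard := dd_le_card hdp
    rw [Fintype.card_fin] at hcard
    exact hfin p (by omega) hrp
  set R : Finset (Fin N) :=
    univ.filter (fun v => ∃ ℓ, Rch (Ares ν (x ((N - 1) * m))) s v ℓ) with hR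
  have hsR : s ∈ R := by
    rw [hR]
    simp only [Finset.mem_filter, Finset.mem_univ, true_and]
    exact ⟨0, Rch.refl s⟩
  have htR : t ∉ R := by
    rw [hR]
    simp only [Finset.mem_filter, Finset.mem_univ, true_and]
    exact hnoreach
  have hfeasT : IsFeasibleFlow s t ν (x ((N - 1) * m)) := feas _ le_rfl
  have hcross : ∀ u v : Fin N, u ∈ R → v ∉ R → resCap ν (x ((N - 1) * m)) u v = 0 := by
    intro u v hu hv
    refine le_antisymm ?_ (resCap_nonneg hfeasT u v)
    by_contra hpos
    push_neg at hpos
    apply hv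
    rw [hR] at hu ⊢
    simp only [Finset.mem_filter, Finset.mem_univ, true_and] at hu ⊢
    obtain ⟨ℓ, hr⟩ := hu
    exact ⟨ℓ + 1, hr.tail hpos⟩
  refine ⟨hfeasT, ?_⟩
  intro x' hx'
  rw [cut_value hx' R hsR htR, cut_value hfeasT R hsR htR]
  apply sub_le_sub
  · apply Finset.sum_le_sum
    intro p hp
    simp only [Finset.mem_filter, Finset.mem_univ, true_and] at hp
    obtain ⟨h1, h2, h3⟩ := hp
    have hc := hcross p.1 p.2 h1 h2
    rw [resCap, if_pos h3] at hc
    have := (hx'.1 p.1 p.2 h3).2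
    linarith
  · apply Finset.sum_le_sum
    intro p hp
    simp only [Finset.mem_filter, Finset.mem_univ, true_and] at hp
    obtain ⟨h1, h2, h3⟩ := hp
    have hc := hcross p.2 p.1 h2 h1
    rw [resCap, if_neg (asymm h3), if_pos h3] at hc
    have := (hx'.1 p.1 p.2 h3).1
    linarith

end P5
end P5dev
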